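/- Let X be a finite type with Fintype.card X = m and let σ : Equiv.Perm X. For each i, let N_i(σ) be the number of i-element subsets s of X with s.image σ = s, and for k ≥ 1 let j_k(σ) be the number of k-cycles of σ (with j_1(σ) the number of fixed points). Then in the polynomial ring Polynomial ℤ: ∑_{i=0}^{m} (N_i(σ) : ℤ) • X^i = ∏_{k=1}^{m} (1 + X^k)^{j_k(σ)}. -/

import Mathlib

open Finset Polynomial

namespace Stmt6Aux

variable {X : Type*} [Fintype X] [DecidableEq X]

/-- The "same cycle" setoid for a permutation. -/
def st (σ : Equiv.Perm X) : Setoid X :=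
  ⟨σ.SameCycle, ⟨fun x => Equiv.Perm.SameCycle.refl σ x, Equiv.Perm.SameCycle.symm,
    Equiv.Perm.SameCycle.trans⟩⟩

instance (σ : Equiv.Perm X) : DecidableEq (Quotient (st σ)) := fun a b =>
  Quotient.recOnSubsingleton₂ a b fun x y =>
    decidable_of_iff (σ.SameCycle x y) ⟨fun h => Quotient.sound h, fun h => Quotient.exact h⟩

instance (σ : Equiv.Perm X) : Fintype (Quotient (st σ)) :=
  @Quotient.fintype X _ (st σ) fun x y => inferInstanceAs (Decidable (σ.SameCycle x y))

/-- Class of an element. -/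
def mkq (σ : Equiv.Perm X) (x : X) : Quotient (st σ) := Quotient.mk (st σ) x

lemma mkq_eq_iff {σ : Equiv.Perm X} {x y : X} : mkq σ x = mkq σ y ↔ σ.SameCycle x y :=
  ⟨fun h => Quotient.exact h, fun h => Quotient.sound h⟩

lemma mkq_apply (σ : Equiv.Perm X) (x : X) : mkq σ (σ x) = mkq σ x :=
  mkq_eq_iff.2 ⟨-1, by simp⟩

/-- The size of an orbit. -/
def sz (σ : Equiv.Perm X) (q : Quotient (st σ)) : ℕ :=
  (univ.filter fun x => mkq σ x = q).card

lemma fiber_fixed {σ : Equiv.Perm X} {x : X} (h : σ x = x) :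
    (univ.filter fun y => mkq σ y = mkq σ x) = {x} := by
  ext y
  simp only [mem_filter, mem_univ, true_and, mem_singleton, mkq_eq_iff]
  exact ⟨fun hy => (hy.symm.eq_of_left h).symm, fun hy => hy ▸ Equiv.Perm.SameCycle.refl σ x⟩

lemma sz_fixed {σ : Equiv.Perm X} {x : X} (h : σ x = x) : sz σ (mkq σ x) = 1 := by
  rw [sz, fiber_fixed h, card_singleton]

lemma fiber_support {σ : Equiv.Perm X} {x : X} (h : x ∈ σ.support) :
    (univ.filter fun y => mkq σ y = mkq σ x) = (σ.cycleOf x).support := by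
  ext y
  simp only [mem_filter, mem_univ, true_and, mkq_eq_iff, Equiv.Perm.mem_support_cycleOf_iff]
  exact ⟨fun hy => ⟨hy.symm, h⟩, fun hy => hy.1.symm⟩

lemma sz_support {σ : Equiv.Perm X} {x : X} (h : x ∈ σ.support) :
    sz σ (mkq σ x) = (σ.cycleOf x).support.card := by
  rw [sz, fiber_support h]

lemma sz_eq_one_iff {σ : Equiv.Perm X} {x : X} : sz σ (mkq σ x) = 1 ↔ σ x = x := by
  constructor
  · intro h
    by_contra hx
    have h1 := sz_support (σ := σ) (x := x) (Equiv.Perm.mem_support.2 hx)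
    rw [h] at h1
    have h2 : 2 ≤ (σ.cycleOf x).support.card :=
      Equiv.Perm.two_le_card_support_cycleOf_iff.2 hx
    omega
  · exact sz_fixed

lemma sz_pos (σ : Equiv.Perm X) (q : Quotient (st σ)) : 0 < sz σ q := by
  induction q using Quotient.inductionOn with
  | h x =>
    apply Finset.card_pos.2
    exact ⟨x, Finset.mem_filter.2 ⟨Finset.mem_univ _, rfl⟩⟩

lemma sz_le (σ : Equiv.Perm X) (q : Quotient (st σ)) : sz σ q ≤ Fintype.card X :=
  (Finset.card_filter_le _ _).trans (le_of_eq Finset.card_univ)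

/-- The level sets of `x ↦ sz σ ⟦x⟧` have cardinality `k * (number of orbits of size k)`. -/
lemma card_level (σ : Equiv.Perm X) (k : ℕ) :
    (univ.filter fun x : X => sz σ (mkq σ x) = k).card
      = k * (univ.filter fun q : Quotient (st σ) => sz σ q = k).card := by
  rw [Finset.card_eq_sum_card_fiberwise
    (f := mkq σ) (t := univ.filter fun q : Quotient (st σ) => sz σ q = k)
    (fun x hx => by simpa using (Finset.mem_filter.1 hx).2)]
  have hterm : ∀ q ∈ (univ.filter fun q : Quotient (st σ) => sz σ q = k),
      ((univ.filter fun x : X => sz σ (mkq σ x) = k).filter fun x => mkq σ x = q).card = k := by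
    intro q hq
    have hq' : sz σ q = k := (Finset.mem_filter.1 hq).2
    have heq : ((univ.filter fun x : X => sz σ (mkq σ x) = k).filter fun x => mkq σ x = q)
        = univ.filter fun x => mkq σ x = q := by
      ext x
      simp only [mem_filter, mem_univ, true_and, and_iff_right_iff_imp]
      intro hx
      rw [hx, hq']
    rw [heq]
    exact hq'
  rw [Finset.sum_congr rfl hterm, Finset.sum_const, smul_eq_mul, mul_comm]

lemma level_one (σ : Equiv.Perm X) :
    (univ.filter fun x : X => sz σ (mkq σ x) = 1) = univ.filter fun x => σ x = x := by
  ext x; simp [sz_eq_one_iff]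

lemma card_fixed (σ : Equiv.Perm X) :
    (univ.filter fun x : X => σ x = x).card = Fintype.card X - σ.support.card := by
  have h := Finset.card_filter_add_card_filter_not
    (s := (univ : Finset X)) (p := fun x => σ x = x)
  rw [Finset.card_univ] at h
  have hs : σ.support.card = (univ.filter fun x => ¬ σ x = x).card := rfl
  omega

lemma level_k (σ : Equiv.Perm X) (k : ℕ) (hk : 2 ≤ k) :
    (univ.filter fun x : X => sz σ (mkq σ x) = k).card
      = k * Multiset.count k σ.cycleType := by
  set F := σ.cycleFactorsFinset.filter (fun c => c.support.card = k) with hF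
  have hmem : ∀ x ∈ (univ.filter fun x : X => sz σ (mkq σ x) = k), σ.cycleOf x ∈ F := by
    intro x hx
    have hxk : sz σ (mkq σ x) = k := (Finset.mem_filter.1 hx).2
    have hxs : x ∈ σ.support := by
      by_contra hxs
      rw [Equiv.Perm.notMem_support] at hxs
      rw [sz_fixed hxs] at hxk
      omega
    rw [hF, Finset.mem_filter]
    exact ⟨Equiv.Perm.cycleOf_mem_cycleFactorsFinset_iff.2 hxs,
      by rw [← sz_support hxs]; exact hxk⟩
  rw [Finset.card_eq_sum_card_fiberwise hmem]
  have hfiber : ∀ c ∈ F,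
      ((univ.filter fun x : X => sz σ (mkq σ x) = k).filter fun x => σ.cycleOf x = c)
        = c.support := by
    intro c hc
    obtain ⟨hcf, hck⟩ := Finset.mem_filter.1 hc
    ext y
    simp only [mem_filter, mem_univ, true_and]
    constructor
    · rintro ⟨hyk, rfl⟩
      have hys : y ∈ σ.support := by
        by_contra hys
        rw [Equiv.Perm.notMem_support] at hys
        rw [sz_fixed hys] at hyk; omega
      rw [Equiv.Perm.mem_support_cycleOf_iff]
      exact ⟨Equiv.Perm.SameCycle.refl σ y, hys⟩
    · intro hy
      have hys : y ∈ σ.support := Equiv.Perm.mem_cycleFactorsFinset_support_le hcf hy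
      have hcy : c = σ.cycleOf y := Equiv.Perm.cycle_is_cycleOf hy hcf
      refine ⟨?_, hcy.symm⟩
      rw [sz_support hys, ← hcy, hck]
  have hsum : ∀ c ∈ F,
      ((univ.filter fun x : X => sz σ (mkq σ x) = k).filter fun x => σ.cycleOf x = c).card
        = k := by
    intro c hc
    rw [hfiber c hc]
    exact (Finset.mem_filter.1 hc).2
  rw [Finset.sum_congr rfl hsum, Finset.sum_const, smul_eq_mul, mul_comm]
  congr 1
  rw [Equiv.Perm.cycleType_def, Multiset.count_map]
  rw [hF, Finset.card_def, Finset.filter_val]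
  congr 1
  apply Multiset.filter_congr
  intro c _
  simp [eq_comm]

/-- Number of orbits of size `k` equals `j k`. -/
lemma card_orbits (σ : Equiv.Perm X) (j : ℕ → ℕ)
    (hj1 : j 1 = Fintype.card X - σ.support.card)
    (hjk : ∀ k, 2 ≤ k → j k = Multiset.count k σ.cycleType)
    (k : ℕ) (hk : 1 ≤ k) :
    (univ.filter fun q : Quotient (st σ) => sz σ q = k).card = j k := by
  rcases eq_or_lt_of_le hk with h1 | h2
  · subst h1
    have h := card_level σ 1
    rw [level_one, card_fixed] at h
    omega
  · have hk2 : 2 ≤ k := h2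
    have h := card_level σ k
    rw [level_k σ k hk2] at h
    rw [hjk k hk2]
    exact Nat.eq_of_mul_eq_mul_left (by omega) h.symm

/-- Invariant finsets are unions of orbits. -/
lemma inv_closed {σ : Equiv.Perm X} {s : Finset X} (hs : s.image σ = s) {x y : X}
    (hx : x ∈ s) (h : σ.SameCycle x y) : y ∈ s := by
  have hstep : ∀ z ∈ s, σ z ∈ s := fun z hz => hs ▸ Finset.mem_image_of_mem σ hz
  have hstep' : ∀ z ∈ s, σ⁻¹ z ∈ s := by
    intro z hz
    rw [← hs] at hz
    obtain ⟨w, hw, rfl⟩ := Finset.mem_image.1 hz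
    simpa using hw
  obtain ⟨i, rfl⟩ := h
  revert hx
  induction i using Int.induction_on generalizing x with
  | zero => intro hx; simpa using hx
  | succ n ih =>
    intro hx
    rw [zpow_add_one, Equiv.Perm.mul_apply]
    exact ih (hstep x hx)
  | pred n ih =>
    intro hx
    rw [zpow_sub_one, Equiv.Perm.mul_apply]
    exact ih (hstep' x hx)

end Stmt6Aux

/-- second Lemma in the proof of Theorem 3.  For a permutation `σ` of an
`m`-element set `X`, with `N i` the number of `i`-element subsets `s` of `X` satisfying
`s.image σ = s` and `j k` the number of `k`-cycles of `σ` (fixed points counting as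
`1`-cycles), in `Polynomial ℤ` we have
`∑_{i=0}^{m} N_i • X^i = ∏_{k=1}^{m} (1 + X^k)^{j_k}`. -/
theorem stmt_6 (X : Type*) [Fintype X] [DecidableEq X] (m : ℕ) (hm : Fintype.card X = m)
    (σ : Equiv.Perm X) (j N : ℕ → ℕ)
    (hj1 : j 1 = m - σ.support.card)
    (hjk : ∀ k, 2 ≤ k → j k = Multiset.count k σ.cycleType)
    (hN : ∀ i, N i =
      (Finset.univ.filter fun s : Finset X => s.card = i ∧ s.image σ = s).card) :
    ∑ i ∈ Finset.range (m + 1), (N i : ℤ) • (Polynomial.X : Polynomial ℤ) ^ i =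
      ∏ k ∈ Finset.Icc 1 m, (1 + (Polynomial.X : Polynomial ℤ) ^ k) ^ j k := by
  classical
  subst hm
  set Q := Quotient (Stmt6Aux.st σ) with hQ
  have h1 : ∑ i ∈ Finset.range (Fintype.card X + 1), (N i : ℤ) • (Polynomial.X : Polynomial ℤ) ^ i
      = ∑ s ∈ Finset.univ.filter (fun s : Finset X => s.image σ = s),
          (Polynomial.X : Polynomial ℤ) ^ s.card := by
    rw [← Finset.sum_fiberwise_of_maps_to (g := fun s : Finset X => s.card)
      (t := Finset.range (Fintype.card X + 1))
      (fun s _ => Finset.mem_range.2 (Nat.lt_succ_of_le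
        ((Finset.card_le_univ s).trans (le_of_eq Finset.card_univ))))]
    refine Finset.sum_congr rfl fun i _ => ?_
    rw [Finset.sum_congr rfl (fun s hs => by rw [(Finset.mem_filter.1 hs).2]),
      Finset.sum_const, hN i, natCast_zsmul]
    congr 2
    ext s
    simp only [Finset.mem_filter, Finset.mem_univ, true_and]
    tauto
  have h2 : ∑ s ∈ Finset.univ.filter (fun s : Finset X => s.image σ = s),
        (Polynomial.X : Polynomial ℤ) ^ s.card
      = ∑ T : Finset Q, (Polynomial.X : Polynomial ℤ) ^ (∑ q ∈ T, Stmt6Aux.sz σ q) := by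
    refine Finset.sum_nbij' (i := fun s => s.image (Stmt6Aux.mkq σ))
      (j := fun T => Finset.univ.filter fun x => Stmt6Aux.mkq σ x ∈ T)
      (fun s _ => Finset.mem_univ _) (fun T _ => ?_) (fun s hs => ?_) (fun T _ => ?_)
      (fun s hs => ?_)
    · simp only [Finset.mem_filter, Finset.mem_univ, true_and]
      ext y
      simp only [Finset.mem_image, Finset.mem_filter, Finset.mem_univ, true_and]
      constructor
      · rintro ⟨x, hx, rfl⟩
        rwa [Stmt6Aux.mkq_apply]
      · intro hy
        refine ⟨σ⁻¹ y, ?_, by simp⟩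
        have h : Stmt6Aux.mkq σ (σ⁻¹ y) = Stmt6Aux.mkq σ y := by
          rw [← Stmt6Aux.mkq_apply σ (σ⁻¹ y)]
          simp
        rwa [h]
    · have hinv : s.image σ = s := by
        simpa using (Finset.mem_filter.1 hs).2
      ext x
      simp only [Finset.mem_filter, Finset.mem_univ, true_and, Finset.mem_image]
      constructor
      · rintro ⟨y, hy, hxy⟩
        exact Stmt6Aux.inv_closed hinv hy (Stmt6Aux.mkq_eq_iff.1 hxy)
      · intro hx
        exact ⟨x, hx, rfl⟩
    · ext q
      induction q using Quotient.inductionOn with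
      | h x =>
        simp only [Finset.mem_image, Finset.mem_filter, Finset.mem_univ, true_and]
        constructor
        · rintro ⟨y, hy, h⟩
          rwa [← h]
        · intro hq
          exact ⟨x, hq, rfl⟩
    · have hinv : s.image σ = s := by
        simpa using (Finset.mem_filter.1 hs).2
      congr 1
      rw [Finset.card_eq_sum_card_fiberwise (f := Stmt6Aux.mkq σ)
        (t := s.image (Stmt6Aux.mkq σ)) (fun x hx => Finset.mem_image_of_mem _ hx)]
      refine Finset.sum_congr rfl fun q hq => ?_
      obtain ⟨y, hy, rfl⟩ := Finset.mem_image.1 hq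
      show _ = Stmt6Aux.sz σ (Stmt6Aux.mkq σ y)
      rw [Stmt6Aux.sz]
      congr 1
      ext x
      simp only [Finset.mem_filter, Finset.mem_univ, true_and, and_iff_right_iff_imp]
      intro hx
      exact Stmt6Aux.inv_closed hinv hy (Stmt6Aux.mkq_eq_iff.1 hx.symm)
  have h3 : ∑ T : Finset Q, (Polynomial.X : Polynomial ℤ) ^ (∑ q ∈ T, Stmt6Aux.sz σ q)
      = ∏ q : Q, (1 + (Polynomial.X : Polynomial ℤ) ^ Stmt6Aux.sz σ q) := by
    symm
    calc ∏ q : Q, (1 + (Polynomial.X : Polynomial ℤ) ^ Stmt6Aux.sz σ q)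
        = ∏ q : Q, ((Polynomial.X : Polynomial ℤ) ^ Stmt6Aux.sz σ q + 1) := by
          exact Finset.prod_congr rfl fun q _ => add_comm _ _
      _ = ∑ T ∈ (Finset.univ : Finset Q).powerset,
            (∏ q ∈ T, (Polynomial.X : Polynomial ℤ) ^ Stmt6Aux.sz σ q) *
              ∏ q ∈ Finset.univ \ T, (1 : Polynomial ℤ) :=
          Finset.prod_add _ _ _
      _ = ∑ T : Finset Q, (Polynomial.X : Polynomial ℤ) ^ (∑ q ∈ T, Stmt6Aux.sz σ q) := by
          rw [Finset.powerset_univ]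
          refine Finset.sum_congr rfl fun T _ => ?_
          rw [Finset.prod_const_one, mul_one, Finset.prod_pow_eq_pow_sum]
  have h4 : ∏ q : Q, (1 + (Polynomial.X : Polynomial ℤ) ^ Stmt6Aux.sz σ q)
      = ∏ k ∈ Finset.Icc 1 (Fintype.card X), (1 + (Polynomial.X : Polynomial ℤ) ^ k) ^
          (Finset.univ.filter fun q : Q => Stmt6Aux.sz σ q = k).card := by
    rw [← Finset.prod_fiberwise_of_maps_to (g := Stmt6Aux.sz σ)
      (t := Finset.Icc 1 (Fintype.card X))
      (fun q _ => Finset.mem_Icc.2 ⟨Stmt6Aux.sz_pos σ q, Stmt6Aux.sz_le σ q⟩)]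
    refine Finset.prod_congr rfl fun k _ => ?_
    rw [Finset.prod_congr rfl (fun q hq => by rw [(Finset.mem_filter.1 hq).2]),
      Finset.prod_const]
  rw [h1, h2, h3, h4]
  refine Finset.prod_congr rfl fun k hk => ?_
  rw [Stmt6Aux.card_orbits σ j hj1 hjk k (Finset.mem_Icc.1 hk).1]
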